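/- Concatenation of bang-bang transforms: given a piecewise-linear path with vertices q⁰, q¹, …, q^k in ℝⁿ, the concatenation of the bang-bang transforms of each edge is an admissible control (‖a(t)‖_∞ ≤ 1 at all times) that steers the n-dimensional double integrator from (q⁰, 0) to (q^k, 0), and the configuration component of the resulting trajectory is exactly the image of the piecewise-linear path. Consequently, if every segment [qʲ, qʲ⁺¹] lies in an open set C_free ⊆ ℝⁿ, then the full state trajectory lies in X_free = {(q, v) : q ∈ C_free}. -/

import Mathlib

namespace BBaux

noncomputable def cl (t : ℝ) : ℝ := max 0 (min 1 t)

lemma cl_nonneg (t : ℝ) : 0 ≤ cl t := le_max_left _ _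
lemma cl_le_one (t : ℝ) : cl t ≤ 1 := max_le zero_le_one (min_le_left _ _)
lemma cl_of_nonpos {t : ℝ} (h : t ≤ 0) : cl t = 0 := by
  unfold cl; rw [min_eq_right (h.trans zero_le_one), max_eq_left h]
lemma cl_of_one_le {t : ℝ} (h : 1 ≤ t) : cl t = 1 := by
  unfold cl; rw [min_eq_left h, max_eq_right zero_le_one]
lemma cl_of_mem {t : ℝ} (h0 : 0 ≤ t) (h1 : t ≤ 1) : cl t = t := by
  unfold cl; rw [min_eq_right h1, max_eq_right h0]
lemma cl_le_abs (t : ℝ) : cl t ≤ |t| := by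
  unfold cl
  rcases le_or_gt t 0 with h | h
  · rw [min_eq_right (h.trans zero_le_one), max_eq_left h]; positivity
  · calc max 0 (min 1 t) ≤ max 0 t := by gcongr; exact min_le_right _ _
    _ ≤ |t| := by rw [max_le_iff]; exact ⟨abs_nonneg t, le_abs_self t⟩
lemma one_sub_cl_le_abs (t : ℝ) : 1 - cl t ≤ |t - 1| := by
  have : min 1 t ≤ cl t := le_max_right _ _
  rcases le_or_gt 1 t with h | h
  · rw [cl_of_one_le h]; simp [abs_nonneg]
  · rw [min_eq_right h.le] at this
    calc 1 - cl t ≤ 1 - t := by linarith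
    _ ≤ |t - 1| := by rw [abs_sub_comm]; exact le_abs_self _
lemma cl_continuous : Continuous cl :=
  continuous_const.max (continuous_const.min continuous_id)

noncomputable def g (t : ℝ) : ℝ := 3 * cl t ^ 2 - 2 * cl t ^ 3
noncomputable def h (t : ℝ) : ℝ := 6 * cl t * (1 - cl t)
noncomputable def aa (t : ℝ) : ℝ := if t ∈ Set.Ioo (0:ℝ) 1 then 6 - 12 * t else 0

lemma g_of_nonpos {t : ℝ} (ht : t ≤ 0) : g t = 0 := by simp [g, cl_of_nonpos ht]
lemma g_of_one_le {t : ℝ} (ht : 1 ≤ t) : g t = 1 := by simp [g, cl_of_one_le ht]; ring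
lemma h_of_nonpos {t : ℝ} (ht : t ≤ 0) : h t = 0 := by simp [h, cl_of_nonpos ht]
lemma h_of_one_le {t : ℝ} (ht : 1 ≤ t) : h t = 0 := by simp [h, cl_of_one_le ht]
lemma g_zero : g 0 = 0 := g_of_nonpos le_rfl
lemma g_one : g 1 = 1 := g_of_one_le le_rfl
lemma g_nonneg (t : ℝ) : 0 ≤ g t := by
  have h0 := cl_nonneg t; have h1 := cl_le_one t; unfold g; nlinarith
lemma g_le_one (t : ℝ) : g t ≤ 1 := by
  have h0 := cl_nonneg t; have h1 := cl_le_one t; unfold g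
  nlinarith [sq_nonneg (1 - cl t), mul_nonneg (mul_nonneg h0 h0) h0]
lemma h_continuous : Continuous h :=
  (continuous_const.mul cl_continuous).mul (continuous_const.sub cl_continuous)
lemma g_continuous : Continuous g :=
  (continuous_const.mul (cl_continuous.pow 2)).sub (continuous_const.mul (cl_continuous.pow 3))
lemma aa_abs_le (t : ℝ) : |aa t| ≤ 6 := by
  unfold aa
  split
  · next hmem => rw [abs_le]; obtain ⟨h1, h2⟩ := hmem; constructor <;> nlinarith
  · simp

lemma sq_isLittleO (c : ℝ) : (fun t : ℝ => (t - c)^2) =o[nhds c] (fun t => t - c) := by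
  have := (hasDerivAt_iff_isLittleO.mp (by simpa using ((hasDerivAt_id c).sub_const c).pow 2))
  simpa using this

lemma hasDerivAt_g (t : ℝ) : HasDerivAt g (h t) t := by
  rcases lt_trichotomy t 0 with ht | rfl | ht
  · rw [h_of_nonpos ht.le]
    apply (hasDerivAt_const t (0:ℝ)).congr_of_eventuallyEq
    filter_upwards [eventually_lt_nhds ht] with s hs
    exact g_of_nonpos hs.le
  · rw [h_of_nonpos le_rfl]
    rw [hasDerivAt_iff_isLittleO]
    apply Asymptotics.IsBigO.trans_isLittleO _ (sq_isLittleO 0)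
    rw [Asymptotics.isBigO_iff]
    refine ⟨3, Filter.Eventually.of_forall fun s => ?_⟩
    have h0 := cl_nonneg s; have h1 := cl_le_abs s
    simp only [Real.norm_eq_abs, smul_zero, sub_zero]
    rw [g_zero, sub_zero, g,
      abs_of_nonneg (by nlinarith [cl_le_one s] : (0:ℝ) ≤ 3 * cl s ^2 - 2 * cl s ^3),
      abs_pow, sq_abs]
    nlinarith [cl_le_one s, abs_nonneg s, sq_abs s, mul_self_le_mul_self h0 h1,
      mul_nonneg (mul_nonneg h0 h0) h0]
  rcases lt_trichotomy t 1 with ht1 | rfl | ht1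
  · have hcl : cl t = t := cl_of_mem ht.le ht1.le
    rw [show h t = 6 * t - 6 * t^2 by rw [h, hcl]; ring]
    have hp : HasDerivAt (fun s : ℝ => 3 * s^2 - 2 * s^3) (6 * t - 6 * t^2) t := by
      have := ((hasDerivAt_pow 2 t).const_mul 3).fun_sub ((hasDerivAt_pow 3 t).const_mul 2)
      refine this.congr_deriv ?_; ring
    apply hp.congr_of_eventuallyEq
    have : Set.Ioo (0:ℝ) 1 ∈ nhds t := Ioo_mem_nhds ht ht1
    filter_upwards [this] with s hs
    rw [g, cl_of_mem hs.1.le hs.2.le]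
  · rw [h_of_one_le le_rfl]
    rw [hasDerivAt_iff_isLittleO]
    apply Asymptotics.IsBigO.trans_isLittleO _ (sq_isLittleO 1)
    rw [Asymptotics.isBigO_iff]
    refine ⟨3, Filter.Eventually.of_forall fun s => ?_⟩
    have h0 := cl_nonneg s; have h1 := one_sub_cl_le_abs s
    have h2 := cl_le_one s
    simp only [Real.norm_eq_abs, smul_zero, sub_zero]
    rw [g_one, abs_pow, sq_abs, g]
    have key : |3 * cl s ^2 - 2 * cl s ^3 - 1| ≤ 3 * (1 - cl s)^2 := by
      rw [abs_le]; constructor <;> nlinarith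
    calc |3 * cl s ^2 - 2 * cl s ^3 - 1| ≤ 3 * (1 - cl s)^2 := key
      _ ≤ 3 * (s - 1)^2 := by nlinarith [abs_nonneg (s-1), sq_abs (s-1)]
  · rw [h_of_one_le ht1.le]
    apply (hasDerivAt_const t (1:ℝ)).congr_of_eventuallyEq
    filter_upwards [eventually_gt_nhds ht1] with s hs
    exact g_of_one_le hs.le

lemma hasDerivAt_h {t : ℝ} (h0 : t ≠ 0) (h1 : t ≠ 1) : HasDerivAt h (aa t) t := by
  rcases lt_trichotomy t 0 with ht | rfl | ht
  · rw [show aa t = 0 by unfold aa; rw [if_neg]; rintro ⟨a, b⟩; linarith]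
    apply (hasDerivAt_const t (0:ℝ)).congr_of_eventuallyEq
    filter_upwards [eventually_lt_nhds ht] with s hs
    exact h_of_nonpos hs.le
  · exact absurd rfl h0
  rcases lt_trichotomy t 1 with ht1 | rfl | ht1
  · rw [show aa t = 6 - 12 * t by unfold aa; rw [if_pos ⟨ht, ht1⟩]]
    have hp : HasDerivAt (fun s : ℝ => 6 * s - 6 * s^2) (6 - 12 * t) t := by
      have := ((hasDerivAt_id t).const_mul 6).fun_sub ((hasDerivAt_pow 2 t).const_mul 6)
      refine this.congr_deriv ?_; ring
    apply hp.congr_of_eventuallyEq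
    filter_upwards [Ioo_mem_nhds ht ht1] with s hs
    rw [h, cl_of_mem hs.1.le hs.2.le]; ring
  · exact absurd rfl h1
  · rw [show aa t = 0 by unfold aa; rw [if_neg]; rintro ⟨a, b⟩; linarith]
    apply (hasDerivAt_const t (0:ℝ)).congr_of_eventuallyEq
    filter_upwards [eventually_gt_nhds ht1] with s hs
    exact h_of_one_le hs.le

lemma g_surj {θ : ℝ} (h0 : 0 ≤ θ) (h1 : θ ≤ 1) : ∃ s ∈ Set.Icc (0:ℝ) 1, g s = θ := by
  have := intermediate_value_Icc (zero_le_one) (g_continuous.continuousOn (s := Set.Icc 0 1))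
  rw [g_zero, g_one] at this
  exact this ⟨h0, h1⟩

end BBaux

section Main
open BBaux

variable {n k : ℕ} (Q : Fin (k+1) → Fin n → ℝ)

noncomputable def DD (j : Fin k) (i : Fin n) : ℝ := Q j.succ i - Q j.castSucc i
noncomputable def BB : ℝ := 1 + ∑ j : Fin k, ∑ i : Fin n, |DD Q j i|
noncomputable def SS : ℝ := Real.sqrt (6 * BB Q)
noncomputable def qf (t : ℝ) (i : Fin n) : ℝ := Q 0 i + ∑ j : Fin k, g (t / SS Q - (j:ℕ)) * DD Q j i
noncomputable def vf (t : ℝ) (i : Fin n) : ℝ := ∑ j : Fin k, (h (t / SS Q - (j:ℕ)) / SS Q) * DD Q j i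
noncomputable def af (t : ℝ) (i : Fin n) : ℝ := ∑ j : Fin k, (aa (t / SS Q - (j:ℕ)) / (SS Q)^2) * DD Q j i

lemma BB_pos : 0 < BB Q := by
  have : (0:ℝ) ≤ ∑ j : Fin k, ∑ i : Fin n, |DD Q j i| :=
    Finset.sum_nonneg fun j _ => Finset.sum_nonneg fun i _ => abs_nonneg _
  unfold BB; linarith

lemma abs_DD_le_BB (j : Fin k) (i : Fin n) : |DD Q j i| ≤ BB Q := by
  unfold BB
  have h1 : |DD Q j i| ≤ ∑ i' : Fin n, |DD Q j i'| :=
    Finset.single_le_sum (f := fun i' => |DD Q j i'|) (fun i' _ => abs_nonneg _) (Finset.mem_univ i)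
  have h2 : (∑ i' : Fin n, |DD Q j i'|) ≤ ∑ j' : Fin k, ∑ i' : Fin n, |DD Q j' i'| :=
    Finset.single_le_sum (f := fun j' => ∑ i' : Fin n, |DD Q j' i'|) (fun j' _ => Finset.sum_nonneg fun i' _ => abs_nonneg _)
      (Finset.mem_univ j)
  linarith

lemma SS_pos : 0 < SS Q := Real.sqrt_pos.mpr (by linarith [BB_pos Q])

lemma SS_sq : SS Q ^ 2 = 6 * BB Q := Real.sq_sqrt (by linarith [BB_pos Q])

lemma hasDerivAt_qf (t : ℝ) (i : Fin n) : HasDerivAt (fun s => qf Q s i) (vf Q t i) t := by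
  unfold qf vf
  apply HasDerivAt.const_add
  apply HasDerivAt.fun_sum
  intro j _
  have hin : HasDerivAt (fun s : ℝ => s / SS Q - (j:ℕ)) (1 / SS Q) t := by
    simpa using ((hasDerivAt_id t).div_const (SS Q)).sub_const ((j:ℕ) : ℝ)
  have := ((hasDerivAt_g (t / SS Q - (j:ℕ))).comp t hin).mul_const (DD Q j i)
  refine this.congr_deriv ?_
  ring

lemma vf_cont (i : Fin n) : Continuous (fun s => vf Q s i) := by
  unfold vf
  apply continuous_finset_sum
  intro j _
  exact ((h_continuous.comp ((continuous_id.div_const _).sub continuous_const)).div_const _).mul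
    continuous_const

lemma hasDerivAt_vf (t : ℝ) (hne : ∀ j : Fin k, t / SS Q - (j:ℕ) ≠ 0 ∧ t / SS Q - (j:ℕ) ≠ 1)
    (i : Fin n) : HasDerivAt (fun s => vf Q s i) (af Q t i) t := by
  unfold vf af
  apply HasDerivAt.fun_sum
  intro j _
  have hin : HasDerivAt (fun s : ℝ => s / SS Q - (j:ℕ)) (1 / SS Q) t := by
    simpa using ((hasDerivAt_id t).div_const (SS Q)).sub_const ((j:ℕ) : ℝ)
  have := (((hasDerivAt_h (hne j).1 (hne j).2).comp t hin).div_const (SS Q)).mul_const (DD Q j i)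
  refine this.congr_deriv ?_
  field_simp

lemma abs_sum_le_single {ι : Type*} [Fintype ι] (f : ι → ℝ) (C : ℝ) (hC : 0 ≤ C)
    (hb : ∀ i, |f i| ≤ C)
    (huniq : ∀ i j, f i ≠ 0 → f j ≠ 0 → i = j) : |∑ i, f i| ≤ C := by
  by_cases hex : ∃ i, f i ≠ 0
  · obtain ⟨i0, hi0⟩ := hex
    rw [Finset.sum_eq_single_of_mem i0 (Finset.mem_univ i0)]
    · exact hb i0
    · intro j _ hji
      by_contra hj
      exact hji (huniq j i0 hj hi0)
  · push_neg at hex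
    rw [Finset.sum_eq_zero fun i _ => hex i]
    simpa using hC

lemma abs_af_le_one (t : ℝ) (i : Fin n) : |af Q t i| ≤ 1 := by
  unfold af
  apply abs_sum_le_single _ _ zero_le_one
  · intro j
    rw [abs_mul, abs_div, abs_pow, abs_of_pos (SS_pos Q), SS_sq]
    have h1 : |aa (t / SS Q - (j:ℕ))| ≤ 6 := aa_abs_le _
    have h2 : |DD Q j i| ≤ BB Q := abs_DD_le_BB Q j i
    have hB := BB_pos Q
    rw [div_mul_eq_mul_div, div_le_one (by linarith)]
    nlinarith [abs_nonneg (aa (t / SS Q - (j:ℕ))), abs_nonneg (DD Q j i)]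
  · intro j j' hj hj'
    have mj : t / SS Q - (j:ℕ) ∈ Set.Ioo (0:ℝ) 1 := by
      by_contra hmem
      simp [aa, hmem] at hj
    have mj' : t / SS Q - (j':ℕ) ∈ Set.Ioo (0:ℝ) 1 := by
      by_contra hmem
      simp [aa, hmem] at hj'
    obtain ⟨a1, a2⟩ := mj; obtain ⟨b1, b2⟩ := mj'
    have c1 : ((j:ℕ):ℝ) < ((j':ℕ):ℝ) + 1 := by linarith
    have c2 : ((j':ℕ):ℝ) < ((j:ℕ):ℝ) + 1 := by linarith
    have d1 : (j:ℕ) < (j':ℕ) + 1 := by exact_mod_cast c1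
    have d2 : (j':ℕ) < (j:ℕ) + 1 := by exact_mod_cast c2
    exact Fin.ext (by omega)

end Main

section Main2
open BBaux

variable {n k : ℕ} (Q : Fin (k+1) → Fin n → ℝ)

lemma telescope (m : ℕ) (hm : m ≤ k) (i : Fin n) :
    Q 0 i + ∑ j : Fin k, (if (j:ℕ) < m then DD Q j i else 0)
      = Q ⟨m, Nat.lt_succ_of_le hm⟩ i := by
  induction m with
  | zero =>
    rw [Finset.sum_eq_zero (fun j _ => by simp)]
    simp [Fin.ext_iff]
  | succ m ih =>
    have hm' : m < k := hm
    have hterm : ∀ j : Fin k, (if (j:ℕ) < m + 1 then DD Q j i else 0)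
        = (if (j:ℕ) < m then DD Q j i else 0) + (if j = ⟨m, hm'⟩ then DD Q j i else 0) := by
      intro j
      rcases lt_trichotomy (j:ℕ) m with hj | hj | hj
      · rw [if_pos (by omega), if_pos hj, if_neg (by simp [Fin.ext_iff]; omega), add_zero]
      · rw [if_pos (by omega), if_neg (by omega), if_pos (Fin.ext hj), zero_add]
      · rw [if_neg (by omega), if_neg (by omega), if_neg (by simp [Fin.ext_iff]; omega), add_zero]
    rw [Finset.sum_congr rfl (fun j _ => hterm j), Finset.sum_add_distrib]
    rw [Finset.sum_ite_eq' Finset.univ (⟨m, hm'⟩ : Fin k) (fun j => DD Q j i),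
      if_pos (Finset.mem_univ _)]
    rw [← add_assoc, ih (le_of_lt hm)]
    show Q ⟨m, _⟩ i + (Q (Fin.succ ⟨m, hm'⟩) i - Q (Fin.castSucc ⟨m, hm'⟩) i) = _
    have e1 : Fin.succ (⟨m, hm'⟩ : Fin k) = ⟨m + 1, Nat.succ_lt_succ hm'⟩ := rfl
    have e2 : Fin.castSucc (⟨m, hm'⟩ : Fin k) = ⟨m, Nat.lt_succ_of_le hm'.le⟩ := rfl
    rw [e1, e2]
    ring_nf

lemma eval_qf (m : ℕ) (hm : m < k) (u : ℝ) (h1 : (m:ℝ) ≤ u) (h2 : u ≤ m + 1) (i : Fin n) :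
    qf Q (u * SS Q) i
      = Q ⟨m, Nat.lt_succ_of_le hm.le⟩ i + g (u - m) * DD Q ⟨m, hm⟩ i := by
  unfold qf
  have hS := SS_pos Q
  have hu : u * SS Q / SS Q = u := by field_simp
  simp only [hu]
  have hterm : ∀ j : Fin k, g (u - (j:ℕ)) * DD Q j i
      = (if (j:ℕ) < m then DD Q j i else 0)
        + (if j = ⟨m, hm⟩ then g (u - m) * DD Q j i else 0) := by
    intro j
    rcases lt_trichotomy (j:ℕ) m with hj | hj | hj
    · have hc : ((j:ℕ):ℝ) + 1 ≤ (m:ℝ) := by exact_mod_cast hj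
      rw [if_pos hj, if_neg (by simp [Fin.ext_iff]; omega), add_zero,
        g_of_one_le (by linarith), one_mul]
    · rw [if_neg (by omega), if_pos (Fin.ext hj), zero_add, hj]
    · have hc : (m:ℝ) + 1 ≤ ((j:ℕ):ℝ) := by exact_mod_cast hj
      rw [if_neg (by omega), if_neg (by simp [Fin.ext_iff]; omega),
        g_of_nonpos (by linarith), zero_mul, add_zero]
  rw [Finset.sum_congr rfl (fun j _ => hterm j), Finset.sum_add_distrib,
    Finset.sum_ite_eq' Finset.univ (⟨m, hm⟩ : Fin k) (fun j => g (u - m) * DD Q j i),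
    if_pos (Finset.mem_univ _), ← add_assoc, telescope Q m hm.le]

end Main2

open BBaux in
/-- Concatenation of bang-bang transforms along a piecewise-linear path with vertices
`Q 0, …, Q k`: there is an admissible control (`|a(t)ᵢ| ≤ 1`) whose trajectory steers
the `n`-dimensional double integrator from `(Q 0, 0)` to `(Q k, 0)`, whose configuration
image is exactly the union of the edge segments; consequently, if every edge lies in an
open set `Cfree`, the whole state trajectory lies in `Xfree = {(q,v) : q ∈ Cfree}`. -/
theorem bang_bang_transform_concatenation
    (n k : ℕ) (hk : 0 < k) (Q : Fin (k + 1) → Fin n → ℝ) :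
    ∃ (T : ℝ) (q v a : ℝ → Fin n → ℝ) (E : Set ℝ), 0 ≤ T ∧ E.Finite ∧
      (∀ t ∈ Set.Icc 0 T, ∀ i, |a t i| ≤ 1) ∧
      (∀ t ∈ Set.Icc 0 T, ∀ i, HasDerivAt (fun s => q s i) (v t i) t) ∧
      (∀ i, ContinuousOn (fun s => v s i) (Set.Icc 0 T)) ∧
      (∀ t ∈ Set.Icc 0 T \ E, ∀ i, HasDerivAt (fun s => v s i) (a t i) t) ∧
      q 0 = Q 0 ∧ v 0 = 0 ∧ q T = Q (Fin.last k) ∧ v T = 0 ∧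
      q '' Set.Icc 0 T
        = ⋃ j : Fin k, segment ℝ (Q j.castSucc) (Q j.succ) ∧
      (∀ Cfree : Set (Fin n → ℝ), IsOpen Cfree →
        (∀ j : Fin k, segment ℝ (Q j.castSucc) (Q j.succ) ⊆ Cfree) →
        ∀ t ∈ Set.Icc 0 T, q t ∈ Cfree) := by
  classical
  have hS := SS_pos Q
  have himage : (fun t => qf Q t) '' Set.Icc 0 ((k:ℝ) * SS Q)
      = ⋃ j : Fin k, segment ℝ (Q j.castSucc) (Q j.succ) := by
    ext x
    constructor
    · rintro ⟨t, ⟨ht0, htT⟩, rfl⟩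
      set u : ℝ := t / SS Q with hu
      have hu0 : 0 ≤ u := div_nonneg ht0 hS.le
      have huk : u ≤ (k:ℝ) := by
        rw [hu, div_le_iff₀ hS]
        linarith
      set m : ℕ := min ⌊u⌋₊ (k - 1) with hmdef
      have hm : m < k := by omega
      have hmu : (m:ℝ) ≤ u := by
        have h1 : (m:ℝ) ≤ (⌊u⌋₊:ℝ) := by exact_mod_cast Nat.min_le_left _ _
        exact h1.trans (Nat.floor_le hu0)
      have hum : u ≤ (m:ℝ) + 1 := by
        by_cases hc : ⌊u⌋₊ ≤ k - 1
        · have hmm : m = ⌊u⌋₊ := by omega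
          rw [hmm]
          exact (Nat.lt_floor_add_one u).le
        · have hmm : m = k - 1 := by omega
          have : ((m:ℕ):ℝ) + 1 = (k:ℝ) := by
            rw [hmm, Nat.cast_sub hk]
            push_cast
            ring
          linarith
      have htu : t = u * SS Q := by
        rw [hu]; field_simp
      rw [Set.mem_iUnion]
      refine ⟨⟨m, hm⟩, ?_⟩
      rw [segment_eq_image']
      refine ⟨g (u - m), ⟨g_nonneg _, g_le_one _⟩, ?_⟩
      funext i
      simp only [Pi.add_apply, Pi.smul_apply, Pi.sub_apply, smul_eq_mul]
      rw [htu, eval_qf Q m hm u hmu hum i]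
      have e2 : Fin.castSucc (⟨m, hm⟩ : Fin k) = ⟨m, Nat.lt_succ_of_le hm.le⟩ := rfl
      rw [e2]
      unfold DD
      rw [e2]
    · intro hx
      rw [Set.mem_iUnion] at hx
      obtain ⟨j, hj⟩ := hx
      rw [segment_eq_image'] at hj
      obtain ⟨θ, ⟨hθ0, hθ1⟩, hθx⟩ := hj
      obtain ⟨s, ⟨hs0, hs1⟩, hgs⟩ := g_surj hθ0 hθ1
      refine ⟨(((j:ℕ):ℝ) + s) * SS Q, ⟨?_, ?_⟩, ?_⟩
      · positivity
      · have hc : ((j:ℕ):ℝ) + 1 ≤ (k:ℝ) := by exact_mod_cast j.isLt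
        have : ((j:ℕ):ℝ) + s ≤ (k:ℝ) := by linarith
        nlinarith
      · rw [← hθx]
        funext i
        have h1 : ((j:ℕ):ℝ) ≤ ((j:ℕ):ℝ) + s := by linarith
        have h2 : ((j:ℕ):ℝ) + s ≤ ((j:ℕ):ℝ) + 1 := by linarith
        show qf Q ((((j:ℕ):ℝ) + s) * SS Q) i = _
        rw [eval_qf Q (j:ℕ) j.isLt _ h1 h2 i]
        simp only [Pi.add_apply, Pi.smul_apply, Pi.sub_apply, smul_eq_mul]
        have e2 : Fin.castSucc j = ⟨(j:ℕ), Nat.lt_succ_of_le j.isLt.le⟩ := rfl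
        have e3 : (⟨(j:ℕ), j.isLt⟩ : Fin k) = j := rfl
        rw [add_sub_cancel_left, hgs, ← e2, e3]
        unfold DD
        rw [e2]
  refine ⟨(k:ℝ) * SS Q, fun t => qf Q t, fun t => vf Q t, fun t => af Q t,
    Set.range (fun j : Fin (k+1) => ((j:ℕ):ℝ) * SS Q),
    mul_nonneg (Nat.cast_nonneg k) hS.le, Set.finite_range _,
    fun t _ i => abs_af_le_one Q t i,
    fun t _ i => hasDerivAt_qf Q t i,
    fun i => (vf_cont Q i).continuousOn,
    ?_, ?_, ?_, ?_, ?_, ?_, ?_⟩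
  · -- derivative of v
    rintro t ⟨htI, htE⟩ i
    apply hasDerivAt_vf
    intro j
    constructor
    · intro hzero
      apply htE
      refine ⟨⟨(j:ℕ), lt_trans j.isLt (Nat.lt_succ_self k)⟩, ?_⟩
      have : t / SS Q = (j:ℕ) := by linarith [hzero]
      field_simp at this ⊢
      linarith [this]
    · intro hone
      apply htE
      refine ⟨⟨(j:ℕ) + 1, Nat.succ_lt_succ j.isLt⟩, ?_⟩
      have h2 : t / SS Q = ((j:ℕ):ℝ) + 1 := by linarith [hone]
      show (((j:ℕ) + 1 : ℕ):ℝ) * SS Q = t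
      push_cast
      field_simp at h2
      linarith [h2]
  · -- q 0 = Q 0
    funext i
    show qf Q 0 i = Q 0 i
    unfold qf
    rw [Finset.sum_eq_zero, add_zero]
    intro j _
    rw [zero_div, g_of_nonpos (by simp), zero_mul]
  · -- v 0 = 0
    funext i
    show vf Q 0 i = 0
    unfold vf
    rw [Finset.sum_eq_zero]
    intro j _
    rw [zero_div, h_of_nonpos (by simp), zero_div, zero_mul]
  · -- q T = Q last
    funext i
    show qf Q ((k:ℝ) * SS Q) i = Q (Fin.last k) i
    unfold qf
    have hu : (k:ℝ) * SS Q / SS Q = (k:ℝ) := by field_simp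
    simp only [hu]
    have hterm : ∀ j : Fin k, g ((k:ℝ) - (j:ℕ)) * DD Q j i
        = (if (j:ℕ) < k then DD Q j i else 0) := by
      intro j
      have hc : ((j:ℕ):ℝ) + 1 ≤ (k:ℝ) := by exact_mod_cast j.isLt
      rw [if_pos j.isLt, g_of_one_le (by linarith), one_mul]
    rw [Finset.sum_congr rfl (fun j _ => hterm j), telescope Q k le_rfl]
    rfl
  · -- v T = 0
    funext i
    show vf Q ((k:ℝ) * SS Q) i = 0
    unfold vf
    have hu : (k:ℝ) * SS Q / SS Q = (k:ℝ) := by field_simp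
    simp only [hu]
    rw [Finset.sum_eq_zero]
    intro j _
    have hc : ((j:ℕ):ℝ) + 1 ≤ (k:ℝ) := by exact_mod_cast j.isLt
    rw [h_of_one_le (by linarith), zero_div, zero_mul]
  · -- image equality
    exact himage
  · -- Cfree
    intro Cfree _ hseg t ht
    have hmem : qf Q t ∈ (fun t => qf Q t) '' Set.Icc 0 ((k:ℝ) * SS Q) := ⟨t, ht, rfl⟩
    rw [himage, Set.mem_iUnion] at hmem
    obtain ⟨j, hj⟩ := hmem
    exact hseg j hj
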